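/- Let M be an even delta-matroid possessing a component of size at least three. Then the basis graph BG(M) contains a triangle; in particular BG(M) is not bipartite. -/

import Mathlib

open scoped symmDiff

/-- A delta-matroid: a finite ground set `E` and a nonempty family `B` of subsets of `E`
satisfying the symmetric exchange axiom. -/
structure DeltaMatroid (α : Type*) [DecidableEq α] where
  E : Finset α
  B : Finset (Finset α)
  nonempty : B.Nonempty
  subset_ground : ∀ S ∈ B, S ⊆ E
  exchange : ∀ B₁ ∈ B, ∀ B₂ ∈ B, ∀ e ∈ B₁ ∆ B₂,
    ∃ f ∈ B₁ ∆ B₂, B₁ ∆ ({e, f} : Finset α) ∈ B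

variable {α : Type*} [DecidableEq α]

/-- A delta-matroid is even if all bases have cardinalities of the same parity. -/
def DeltaMatroid.IsEven (M : DeltaMatroid α) : Prop :=
  ∀ B₁ ∈ M.B, ∀ B₂ ∈ M.B, B₁.card % 2 = B₂.card % 2

/-- `X` is a separator of `M` if `M` is the direct sum of its restrictions to `X`
and to `E \ X`; equivalently, bases can be freely recombined across `X`. -/
def DeltaMatroid.IsSeparator (M : DeltaMatroid α) (X : Finset α) : Prop :=
  X ⊆ M.E ∧ ∀ B₁ ∈ M.B, ∀ B₂ ∈ M.B, (B₁ ∩ X) ∪ (B₂ \ X) ∈ M.B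

/-- A component is a minimal nonempty separator. -/
def DeltaMatroid.IsComponent (M : DeltaMatroid α) (C : Finset α) : Prop :=
  M.IsSeparator C ∧ C.Nonempty ∧
    ∀ X, M.IsSeparator X → X.Nonempty → X ⊆ C → X = C

/-- The basis graph of a delta-matroid: vertices are the bases, two bases being
adjacent iff their symmetric difference has exactly two elements. -/
def DeltaMatroid.BG (M : DeltaMatroid α) : SimpleGraph ↥M.B where
  Adj S T := ((S : Finset α) ∆ (T : Finset α)).card = 2
  symm := by
    constructor
    intro S T h
    beta_reduce at h ⊢
    rwa [symmDiff_comm]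
  loopless := by
    constructor
    intro S h
    simp [symmDiff_self] at h

/-- The graph `G` has a cycle of length `k` through the edge `e`. -/
def CycleThroughEdge {V : Type*} (G : SimpleGraph V) (e : Sym2 V) (k : ℕ) : Prop :=
  ∃ (v : V) (c : G.Walk v v), c.IsCycle ∧ c.length = k ∧ e ∈ c.edges

/-- An edge is pancyclic if it lies in a cycle of every length `3 ≤ k ≤ n`. -/
def EdgePancyclic {V : Type*} [Fintype V] (G : SimpleGraph V) (e : Sym2 V) : Prop :=
  ∀ k, 3 ≤ k → k ≤ Fintype.card V → CycleThroughEdge G e k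

/-- An edge is almost pancyclic if it lies in a cycle of every length `4 ≤ k ≤ n`. -/
def EdgeAlmostPancyclic {V : Type*} [Fintype V] (G : SimpleGraph V) (e : Sym2 V) : Prop :=
  ∀ k, 4 ≤ k → k ≤ Fintype.card V → CycleThroughEdge G e k

/-- An edge is even pancyclic if it lies in a cycle of length `k` for every
`3 ≤ k ≤ n` with `k` even or `k = n`. -/
def EdgeEvenPancyclic {V : Type*} [Fintype V] (G : SimpleGraph V) (e : Sym2 V) : Prop :=
  ∀ k, 3 ≤ k → k ≤ Fintype.card V → (Even k ∨ k = Fintype.card V) →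
    CycleThroughEdge G e k

/-- The hypercube graph `Q_d`: vertices `{0,1}^d`, adjacent iff they differ in
exactly one coordinate. -/
def hypercube (d : ℕ) : SimpleGraph (Fin d → Bool) where
  Adj x y := ∃ i, x i ≠ y i ∧ ∀ j, j ≠ i → x j = y j
  symm := by
    constructor
    rintro x y ⟨i, h, hj⟩
    exact ⟨i, h.symm, fun j hne => (hj j hne).symm⟩
  loopless := by
    constructor
    rintro x ⟨i, h, -⟩
    exact h rfl

namespace Statement14Aux

lemma sd_cancel (A P : Finset α) : (A ∆ P) ∆ A = P := by
  ext x; simp [Finset.mem_symmDiff]; try tauto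

lemma sd_cancel2 (A P Q : Finset α) : (A ∆ P) ∆ (A ∆ Q) = P ∆ Q := by
  ext x; simp [Finset.mem_symmDiff]; try tauto

lemma card_sd_single (A : Finset α) (e : α) :
    (A ∆ ({e} : Finset α)).card % 2 ≠ A.card % 2 := by
  by_cases he : e ∈ A
  · have h1 : A ∆ {e} = A.erase e := by
      ext x; by_cases hx : x = e <;> simp_all [Finset.mem_symmDiff]
    have h2 := Finset.card_pos.mpr ⟨e, he⟩
    rw [h1, Finset.card_erase_of_mem he]
    omega
  · have h1 : A ∆ {e} = insert e A := by
      ext x; by_cases hx : x = e <;> simp_all [Finset.mem_symmDiff]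
    rw [h1, Finset.card_insert_of_notMem he]
    omega

/-- Exchange with distinct elements, from evenness. -/
lemma exch2 (M : DeltaMatroid α) (hM : M.IsEven) {A B' : Finset α}
    (hA : A ∈ M.B) (hB : B' ∈ M.B) {e : α} (he : e ∈ A ∆ B') :
    ∃ f ∈ A ∆ B', f ≠ e ∧ A ∆ {e, f} ∈ M.B := by
  obtain ⟨f, hf, hfB⟩ := M.exchange A hA B' hB e he
  refine ⟨f, hf, ?_, hfB⟩
  intro hfe
  subst hfe
  have hpair : ({f, f} : Finset α) = {f} := by simp
  rw [hpair] at hfB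
  exact card_sd_single A f (hM _ hfB _ hA)



/-- Triangle-freeness of the basis graph, phrased on finsets. -/
def TF (M : DeltaMatroid α) : Prop :=
  ∀ T₁ ∈ M.B, ∀ T₂ ∈ M.B, ∀ T₃ ∈ M.B,
    (T₁ ∆ T₂).card = 2 → (T₂ ∆ T₃).card = 2 → (T₁ ∆ T₃).card = 2 → False

lemma pair_sd_pair {e f g : α} (hef : e ≠ f) (heg : e ≠ g) (hfg : f ≠ g) :
    ({e, f} : Finset α) ∆ {e, g} = {f, g} := by
  ext x
  by_cases h1 : x = e <;> by_cases h2 : x = f <;> by_cases h3 : x = g <;>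
    simp_all [Finset.mem_symmDiff]

/-- No two exchanges at a basis can share an element (triangle-free). -/
lemma no_shared (M : DeltaMatroid α) (tf : TF M) {A : Finset α} (hA : A ∈ M.B)
    {e f g : α} (hef : e ≠ f) (heg : e ≠ g) (hfg : f ≠ g)
    (h1 : A ∆ {e, f} ∈ M.B) (h2 : A ∆ {e, g} ∈ M.B) : False := by
  refine tf _ h1 _ hA _ h2 ?_ ?_ ?_
  · rw [sd_cancel]; exact Finset.card_pair hef
  · rw [symmDiff_symmDiff_cancel_left]; exact Finset.card_pair heg
  · rw [sd_cancel2, pair_sd_pair hef heg hfg]; exact Finset.card_pair hfg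

/-- Disjoint exchanges commute (triangle-free). -/
lemma lemA (M : DeltaMatroid α) (hM : M.IsEven) (tf : TF M) {A : Finset α}
    (hA : A ∈ M.B) {e f g h : α} (hef : e ≠ f) (hgh : g ≠ h)
    (hge : g ≠ e) (hgf : g ≠ f) (hhe : h ≠ e) (hhf : h ≠ f)
    (h1 : A ∆ {e, f} ∈ M.B) (h2 : A ∆ {g, h} ∈ M.B) :
    (A ∆ {e, f}) ∆ {g, h} ∈ M.B := by
  have hg : g ∈ (A ∆ {e, f}) ∆ (A ∆ {g, h}) := by
    rw [sd_cancel2]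
    simp [Finset.mem_symmDiff, hge, hgf]
  obtain ⟨f', hf', hf'g, hf'B⟩ := exch2 M hM h1 h2 hg
  rw [sd_cancel2] at hf'
  simp [Finset.mem_symmDiff] at hf'
  have hf'cases : f' = e ∨ f' = f ∨ f' = h := by
    rcases hf' with ⟨h', -⟩ | ⟨h', -⟩ <;> rcases h' with h' | h' <;> tauto
  rcases hf'cases with heq | heq | heq <;> rw [heq] at hf'B
  · -- A ∆ {e,f} ∆ {g,e} = A ∆ {f,g} : contradiction via no_shared at A, shared f
    exfalso
    have hx : (A ∆ {e, f}) ∆ {g, e} = A ∆ {f, g} := by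
      rw [symmDiff_assoc]
      congr 1
      ext x
      by_cases hx1 : x = e <;> by_cases hx2 : x = f <;> by_cases hx3 : x = g <;>
        simp_all [Finset.mem_symmDiff]
    rw [hx] at hf'B
    rw [Finset.pair_comm] at h1
    exact no_shared M tf hA hef.symm hgf.symm hge.symm h1 hf'B
  · -- A ∆ {e,f} ∆ {g,f} = A ∆ {e,g} : shared e
    exfalso
    have hx : (A ∆ {e, f}) ∆ {g, f} = A ∆ {e, g} := by
      rw [symmDiff_assoc]
      congr 1
      ext x
      by_cases hx1 : x = e <;> by_cases hx2 : x = f <;> by_cases hx3 : x = g <;>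
        simp_all [Finset.mem_symmDiff]
    rw [hx] at hf'B
    exact no_shared M tf hA hef hge.symm hgf.symm h1 hf'B
  · exact hf'B



/-- Moving along an edge of the basis graph preserves the `{e,f}`-exchange and the
trace on `{e,f}` changes in a controlled way (triangle-free). -/
lemma step (M : DeltaMatroid α) (hM : M.IsEven) (tf : TF M) {e f : α} (hef : e ≠ f)
    {A A' : Finset α} (hA : A ∈ M.B) (hA' : A' ∈ M.B)
    {g h : α} (hgh : g ≠ h) (hP : A' = A ∆ {g, h})
    (hΦ : A ∆ {e, f} ∈ M.B) :
    A' ∆ {e, f} ∈ M.B ∧ (A' ∩ {e, f} = A ∩ {e, f} ∨ A' ∩ {e, f} = {e, f} \ A) := by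
  subst hP
  rcases eq_or_ne g e with hge | hge
  · rcases eq_or_ne h f with hhf | hhf
    · -- {g,h} = {e,f}
      have hpair : ({g, h} : Finset α) = {e, f} := by rw [hge, hhf]
      rw [hpair]
      refine ⟨by rw [symmDiff_symmDiff_cancel_right]; exact hA, Or.inr ?_⟩
      ext x
      by_cases hx1 : x = e <;> by_cases hx2 : x = f <;> simp_all [Finset.mem_symmDiff]
    · -- shared e
      exfalso
      have hpair : ({g, h} : Finset α) = {e, h} := by rw [hge]
      rw [hpair] at hA'
      exact no_shared M tf hA hef (fun hx => hgh (hge.symm ▸ hx.symm ▸ rfl)) (Ne.symm hhf) hΦ hA'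
  · rcases eq_or_ne g f with hgf | hgf
    · rcases eq_or_ne h e with hhe | hhe
      · -- {g,h} = {f,e}
        have hpair : ({g, h} : Finset α) = {e, f} := by rw [hgf, hhe, Finset.pair_comm]
        rw [hpair]
        refine ⟨by rw [symmDiff_symmDiff_cancel_right]; exact hA, Or.inr ?_⟩
        ext x
        by_cases hx1 : x = e <;> by_cases hx2 : x = f <;> simp_all [Finset.mem_symmDiff]
      · -- shared f
        exfalso
        have hpair : ({g, h} : Finset α) = {f, h} := by rw [hgf]
        rw [hpair] at hA'
        rw [Finset.pair_comm e f] at hΦ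
        exact no_shared M tf hA (Ne.symm hef)
          (fun hx => hgh (hgf.symm ▸ hx.symm ▸ rfl)) (Ne.symm hhe) hΦ hA'
    · rcases eq_or_ne h e with hhe | hhe
      · -- shared e
        exfalso
        have hpair : ({g, h} : Finset α) = {e, g} := by rw [hhe, Finset.pair_comm]
        rw [hpair] at hA'
        exact no_shared M tf hA hef (Ne.symm hge) (Ne.symm hgf) hΦ hA'
      · rcases eq_or_ne h f with hhf | hhf
        · -- shared f
          exfalso
          have hpair : ({g, h} : Finset α) = {f, g} := by rw [hhf, Finset.pair_comm]
          rw [hpair] at hA'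
          rw [Finset.pair_comm e f] at hΦ
          exact no_shared M tf hA (Ne.symm hef) (Ne.symm hgf) (Ne.symm hge) hΦ hA'
        · -- disjoint case
          have hkey := lemA M hM tf hA hef hgh hge hgf hhe hhf hΦ hA'
          constructor
          · have hx : A ∆ {g, h} ∆ {e, f} = A ∆ {e, f} ∆ {g, h} := by
              rw [symmDiff_assoc, symmDiff_assoc, symmDiff_comm ({g, h} : Finset α)]
            rw [hx]
            exact hkey
          · left
            ext x
            by_cases hx1 : x = e <;> by_cases hx2 : x = f <;>
              by_cases hx3 : x = g <;> by_cases hx4 : x = h <;>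
              simp_all [Finset.mem_symmDiff]


/-- The `{e,f}`-exchange propagates to all bases, and traces are dichotomous. -/
lemma propagate (M : DeltaMatroid α) (hM : M.IsEven) (tf : TF M) {e f : α} (hef : e ≠ f)
    {B₀ : Finset α} (hB₀ : B₀ ∈ M.B) (hB₀' : B₀ ∆ {e, f} ∈ M.B) :
    ∀ n A, A ∈ M.B → (A ∆ B₀).card = n →
      A ∆ {e, f} ∈ M.B ∧
        (A ∩ {e, f} = B₀ ∩ {e, f} ∨ A ∩ {e, f} = {e, f} \ B₀) := by
  intro n
  induction n using Nat.strong_induction_on with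
  | _ n ih =>
    intro A hA hcard
    rcases Nat.eq_zero_or_pos n with h0 | hpos
    · have hAB : A = B₀ := by
        have h1 := Finset.card_eq_zero.mp (h0 ▸ hcard)
        rw [← symmDiff_eq_bot]
        exact h1
      subst hAB
      exact ⟨hB₀', Or.inl rfl⟩
    · have hne : (A ∆ B₀).Nonempty := by
        rw [← Finset.card_pos, hcard]; exact hpos
      obtain ⟨e', he'⟩ := hne
      obtain ⟨f', hf', hne', hA'⟩ := exch2 M hM hA hB₀ he'
      have hd : (A ∆ {e', f'}) ∆ B₀ = (A ∆ B₀) \ {e', f'} := by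
        ext x
        by_cases hx1 : x = e' <;> by_cases hx2 : x = f' <;>
          simp_all [Finset.mem_symmDiff] <;> tauto
      have hsub : ({e', f'} : Finset α) ⊆ A ∆ B₀ := by
        intro x hx
        rcases Finset.mem_insert.mp hx with rfl | hx
        · exact he'
        · rw [Finset.mem_singleton] at hx; subst hx; exact hf'
      have hcard' : ((A ∆ {e', f'}) ∆ B₀).card = n - 2 := by
        rw [hd, Finset.card_sdiff_of_subset hsub, Finset.card_pair (Ne.symm hne'), hcard]
      have hn2 : ({e', f'} : Finset α).card ≤ (A ∆ B₀).card := Finset.card_le_card hsub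
      rw [Finset.card_pair (Ne.symm hne'), hcard] at hn2
      have hlt : n - 2 < n := by omega
      obtain ⟨hΦ', htr'⟩ := ih (n - 2) hlt (A ∆ {e', f'}) hA' hcard'
      -- now come back from A ∆ {e',f'} to A
      have hback : A = (A ∆ {e', f'}) ∆ {e', f'} := (symmDiff_symmDiff_cancel_right ({e', f'} : Finset α) A).symm
      obtain ⟨hΦ, htr⟩ := step M hM tf hef hA' hA (Ne.symm hne') hback hΦ'
      refine ⟨hΦ, ?_⟩
      -- combine trace dichotomies
      rcases htr with h1 | h1 <;> rcases htr' with h2 | h2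
      · rw [h1, h2]; left; rfl
      · rw [h1, h2]; right; rfl
      · -- A ∩ S = S \ (A ∆ {e',f'}),  (A ∆ {e',f'}) ∩ S = B₀ ∩ S
        right
        rw [h1]
        have hx : ({e, f} : Finset α) \ (A ∆ {e', f'}) = {e, f} \ ((A ∆ {e', f'}) ∩ {e, f}) := by
          ext x; simp [Finset.mem_sdiff]; try tauto
        rw [hx, h2]
        ext x; simp [Finset.mem_sdiff]; try tauto
      · -- A ∩ S = S \ (A ∆ {e',f'}),  (A ∆ {e',f'}) ∩ S = S \ B₀
        left
        rw [h1]
        have hx : ({e, f} : Finset α) \ (A ∆ {e', f'}) = {e, f} \ ((A ∆ {e', f'}) ∩ {e, f}) := by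
          ext x; simp [Finset.mem_sdiff]; try tauto
        rw [hx, h2]
        ext x; simp [Finset.mem_sdiff]; try tauto


lemma sep_combine {P Q S B₀ : Finset α}
    (hP : P ∩ S = B₀ ∩ S ∨ P ∩ S = S \ B₀)
    (hQ : Q ∩ S = B₀ ∩ S ∨ Q ∩ S = S \ B₀) :
    (P ∩ S) ∪ (Q \ S) = Q ∨ (P ∩ S) ∪ (Q \ S) = Q ∆ S := by
  rcases hP with h | h <;> rcases hQ with h' | h'
  · left
    have hp := Finset.ext_iff.mp h; have hq := Finset.ext_iff.mp h'
    ext x; have h1 := hp x; have h2 := hq x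
    simp [Finset.mem_symmDiff] at h1 h2 ⊢; tauto
  · right
    have hp := Finset.ext_iff.mp h; have hq := Finset.ext_iff.mp h'
    ext x; have h1 := hp x; have h2 := hq x
    simp [Finset.mem_symmDiff] at h1 h2 ⊢; tauto
  · right
    have hp := Finset.ext_iff.mp h; have hq := Finset.ext_iff.mp h'
    ext x; have h1 := hp x; have h2 := hq x
    simp [Finset.mem_symmDiff] at h1 h2 ⊢; tauto
  · left
    have hp := Finset.ext_iff.mp h; have hq := Finset.ext_iff.mp h'
    ext x; have h1 := hp x; have h2 := hq x
    simp [Finset.mem_symmDiff] at h1 h2 ⊢; tauto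

end Statement14Aux

/-- If an even delta-matroid has a component of size at least three, then its
basis graph contains a triangle; in particular it is not bipartite. -/
theorem statement14 (M : DeltaMatroid α) (hM : M.IsEven)
    (hC : ∃ C, M.IsComponent C ∧ 3 ≤ C.card) :
    (∃ a b c : ↥M.B, M.BG.Adj a b ∧ M.BG.Adj b c ∧ M.BG.Adj a c) ∧
      ¬ M.BG.Colorable 2 := by
  classical
  have htri : ∃ a b c : ↥M.B, M.BG.Adj a b ∧ M.BG.Adj b c ∧ M.BG.Adj a c := by
    by_contra htf
    push_neg at htf
    have tf : Statement14Aux.TF M := by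
      intro T₁ h₁ T₂ h₂ T₃ h₃ c₁ c₂ c₃
      exact htf ⟨T₁, h₁⟩ ⟨T₂, h₂⟩ ⟨T₃, h₃⟩ c₁ c₂ c₃
    obtain ⟨C, ⟨⟨hCE, hCsep⟩, hCne, hCmin⟩, hC3⟩ := hC
    by_cases htr : ∀ B₁ ∈ M.B, ∀ B₂ ∈ M.B, B₁ ∩ C = B₂ ∩ C
    · -- all bases have the same trace on C : a singleton of C is a separator
      obtain ⟨x, hx⟩ := hCne
      have hxsep : M.IsSeparator {x} := by
        refine ⟨Finset.singleton_subset_iff.mpr (hCE hx), ?_⟩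
        intro B₁ h₁ B₂ h₂
        have he : B₁ ∩ {x} = B₂ ∩ {x} := by
          have h := Finset.ext_iff.mp (htr B₁ h₁ B₂ h₂)
          ext y
          rcases eq_or_ne y x with rfl | hy
          · have h2 := h y
            simp only [Finset.mem_inter] at h2 ⊢
            simp only [Finset.mem_singleton]
            constructor
            · rintro ⟨hy1, -⟩; exact ⟨(h2.mp ⟨hy1, hx⟩).1, trivial⟩
            · rintro ⟨hy1, -⟩; exact ⟨(h2.mpr ⟨hy1, hx⟩).1, trivial⟩
          · simp [hy]
        rw [he]
        have hrec : B₂ ∩ {x} ∪ B₂ \ {x} = B₂ := by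
          ext y; simp only [Finset.mem_union, Finset.mem_inter, Finset.mem_sdiff]; tauto
        rw [hrec]; exact h₂
      have hxC := hCmin {x} hxsep ⟨x, Finset.mem_singleton_self x⟩
        (Finset.singleton_subset_iff.mpr hx)
      rw [← hxC, Finset.card_singleton] at hC3
      omega
    · -- two bases differ on C : produce an exchange pair inside C
      push_neg at htr
      obtain ⟨B₁, h₁, B₂, h₂, hne12⟩ := htr
      have hB₃ : (B₁ ∩ C) ∪ (B₂ \ C) ∈ M.B := hCsep B₁ h₁ B₂ h₂
      have hD : B₂ ∆ ((B₁ ∩ C) ∪ (B₂ \ C)) = (B₁ ∩ C) ∆ (B₂ ∩ C) := by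
        ext y
        by_cases hy : y ∈ C <;>
          simp_all [Finset.mem_symmDiff] <;> tauto
      have hDne : (B₂ ∆ ((B₁ ∩ C) ∪ (B₂ \ C))).Nonempty := by
        rw [hD, Finset.nonempty_iff_ne_empty]
        intro hemp
        apply hne12
        have := symmDiff_eq_bot.mp hemp
        exact this
      obtain ⟨e, he⟩ := hDne
      obtain ⟨f, hf, hfe, hB₂'⟩ := Statement14Aux.exch2 M hM h₂ hB₃ he
      have hef : e ≠ f := Ne.symm hfe
      have heC : e ∈ C := by
        rw [hD] at he
        rw [Finset.mem_symmDiff] at he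
        rcases he with ⟨h', -⟩ | ⟨h', -⟩ <;> exact (Finset.mem_inter.mp h').2
      have hfC : f ∈ C := by
        rw [hD] at hf
        rw [Finset.mem_symmDiff] at hf
        rcases hf with ⟨h', -⟩ | ⟨h', -⟩ <;> exact (Finset.mem_inter.mp h').2
      have hSC : ({e, f} : Finset α) ⊆ C := by
        intro y hy
        rcases Finset.mem_insert.mp hy with rfl | hy
        · exact heC
        · rw [Finset.mem_singleton] at hy; subst hy; exact hfC
      have hsep : M.IsSeparator {e, f} := by
        refine ⟨hSC.trans hCE, ?_⟩
        intro P hP Q hQ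
        obtain ⟨-, htrP⟩ :=
          Statement14Aux.propagate M hM tf hef h₂ hB₂' ((P ∆ B₂).card) P hP rfl
        obtain ⟨hΦQ, htrQ⟩ :=
          Statement14Aux.propagate M hM tf hef h₂ hB₂' ((Q ∆ B₂).card) Q hQ rfl
        rcases Statement14Aux.sep_combine htrP htrQ with hres | hres
        · rw [hres]; exact hQ
        · rw [hres]; exact hΦQ
      have heqC := hCmin {e, f} hsep ⟨e, Finset.mem_insert_self e {f}⟩ hSC
      rw [← heqC, Finset.card_pair hef] at hC3
      omega
  refine ⟨htri, ?_⟩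
  intro hcol
  obtain ⟨a, b, c, hab, hbc, hac⟩ := htri
  exact (hcol.cliqueFree (by norm_num)) {a, b, c}
    (SimpleGraph.is3Clique_triple_iff.mpr ⟨hab, hac, hbc⟩)
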